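/- Let ℓ be a bounded loss satisfying 0 ≤ ℓ(+∞) < ℓ(-∞) < +∞ (limits at ±∞), where ℓ(+∞) = lim_{z→+∞} ℓ(z) and ℓ(-∞) = lim_{z→-∞} ℓ(z). Suppose p_+ and p_- are almost surely separable (there is a measurable set A with p_+(A) = 1 and p_-(A) = 0), π ∈ (0,1), and p_tr = θ·p_+ + (1-θ)·p_- for some θ ∈ [0,1]. Then there do not exist constants a, b, θ such that for every measurable g : X → [-∞,+∞], π·E_{p_+}[ℓ(g)] + (1-π)·E_{p_-}[ℓ(-g)] = E_{p_tr}[a·ℓ(g) + b·ℓ(-g)]. -/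

import Mathlib

open MeasureTheory

lemma int_combo16 {X : Type*} [MeasurableSpace X]
    (pP pN : Measure X) [IsProbabilityMeasure pP] [IsProbabilityMeasure pN]
    (θ : ℝ) (h0 : 0 ≤ θ) (h1 : θ ≤ 1) (h : X → ℝ) (c₁ c₂ : ℝ)
    (hP : h =ᵐ[pP] fun _ => c₁) (hN : h =ᵐ[pN] fun _ => c₂) :
    ∫ x, h x ∂(ENNReal.ofReal θ • pP + ENNReal.ofReal (1 - θ) • pN)
      = θ * c₁ + (1 - θ) * c₂ := by
  have hIP : Integrable h pP := (integrable_const c₁).congr hP.symm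
  have hIN : Integrable h pN := (integrable_const c₂).congr hN.symm
  rw [integral_add_measure (hIP.smul_measure ENNReal.ofReal_ne_top)
    (hIN.smul_measure ENNReal.ofReal_ne_top),
    integral_smul_measure, integral_smul_measure,
    integral_congr_ae hP, integral_congr_ae hN, integral_const, integral_const]
  simp [ENNReal.toReal_ofReal h0, ENNReal.toReal_ofReal (by linarith : (0:ℝ) ≤ 1 - θ)]

/-- Theorem 1 (impossibility of risk rewrite from one set of unlabeled data):
for a bounded loss `ℓ` on the extended reals with `0 ≤ ℓ(+∞) < ℓ(-∞) < ∞`, if the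
class-conditionals `pP` and `pN` are almost surely separable and `π ∈ (0,1)`, then
there are no constants `a, b` and class prior `θ ∈ [0,1]` such that
`π·E_{pP}[ℓ(g)] + (1-π)·E_{pN}[ℓ(-g)] = E_{p_tr}[a·ℓ(g) + b·ℓ(-g)]` for every
measurable `g : X → [-∞,+∞]`, where `p_tr = θ·pP + (1-θ)·pN`. -/
theorem stmt16 {X : Type*} [MeasurableSpace X]
    (pP pN : Measure X) [IsProbabilityMeasure pP] [IsProbabilityMeasure pN]
    (ℓ : EReal → ℝ) (hmeas : Measurable ℓ)
    (hbdd : ∃ C : ℝ, ∀ z, |ℓ z| ≤ C)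
    (hlim : 0 ≤ ℓ ⊤ ∧ ℓ ⊤ < ℓ ⊥)
    (A : Set X) (hA : MeasurableSet A) (hAP : pP A = 1) (hAN : pN A = 0)
    (π : ℝ) (hπ0 : 0 < π) (hπ1 : π < 1) :
    ¬ ∃ (a b θ : ℝ), 0 ≤ θ ∧ θ ≤ 1 ∧
      ∀ g : X → EReal, Measurable g →
        π * ∫ x, ℓ (g x) ∂pP + (1 - π) * ∫ x, ℓ (-g x) ∂pN =
          ∫ x, (a * ℓ (g x) + b * ℓ (-g x))
            ∂(ENNReal.ofReal θ • pP + ENNReal.ofReal (1 - θ) • pN) := by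
  classical
  rintro ⟨a, b, θ, hθ0, hθ1, hg⟩
  set LT := ℓ ⊤ with hLT
  set LB := ℓ ⊥ with hLB
  obtain ⟨hT0, hTB⟩ := hlim
  -- ae membership facts
  have hPmem : ∀ᵐ x ∂pP, x ∈ A := by
    have : pP Aᶜ = 0 := by
      rw [measure_compl hA (measure_ne_top _ _), hAP]; simp
    exact mem_ae_iff.2 this
  have hNmem : ∀ᵐ x ∂pN, x ∉ A := by
    have := hAN
    rwa [← compl_compl A, ← mem_ae_iff] at this
  -- g ≡ ⊤
  have eq1 : π * LT + (1 - π) * LB = a * LT + b * LB := by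
    have h := hg (fun _ => ⊤) measurable_const
    rw [int_combo16 pP pN θ hθ0 hθ1 _ (a * LT + b * LB) (a * LT + b * LB)
      (Filter.Eventually.of_forall fun x => by simp [hLT, hLB])
      (Filter.Eventually.of_forall fun x => by simp [hLT, hLB])] at h
    simp only [integral_const, measure_univ, probReal_univ, ENNReal.toReal_one, smul_eq_mul, one_mul] at h
    rw [show ℓ (-(⊤ : EReal)) = LB by simp [hLB]] at h
    linarith [h]
  -- g ≡ ⊥
  have eq2 : π * LB + (1 - π) * LT = a * LB + b * LT := by
    have h := hg (fun _ => ⊥) measurable_const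
    rw [int_combo16 pP pN θ hθ0 hθ1 _ (a * LB + b * LT) (a * LB + b * LT)
      (Filter.Eventually.of_forall fun x => by simp [hLT, hLB])
      (Filter.Eventually.of_forall fun x => by simp [hLT, hLB])] at h
    simp only [integral_const, measure_univ, probReal_univ, ENNReal.toReal_one, smul_eq_mul, one_mul] at h
    rw [show ℓ (-(⊥ : EReal)) = LT by simp [hLT]] at h
    linarith [h]
  -- separating classifier
  have eq3 : LT = θ * (a * LT + b * LB) + (1 - θ) * (a * LB + b * LT) := by
    set g : X → EReal := fun x => if x ∈ A then ⊤ else ⊥ with hgdef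
    have hgm : Measurable g := Measurable.ite hA measurable_const measurable_const
    have h := hg g hgm
    have hPg : (fun x => ℓ (g x)) =ᵐ[pP] fun _ => LT := by
      filter_upwards [hPmem] with x hx; simp [hgdef, hx, hLT]
    have hNg : (fun x => ℓ (-g x)) =ᵐ[pN] fun _ => LT := by
      filter_upwards [hNmem] with x hx; simp [hgdef, hx, hLT]
    have hPc : (fun x => a * ℓ (g x) + b * ℓ (-g x)) =ᵐ[pP] fun _ => a * LT + b * LB := by
      filter_upwards [hPmem] with x hx; simp [hgdef, hx, hLT, hLB]
    have hNc : (fun x => a * ℓ (g x) + b * ℓ (-g x)) =ᵐ[pN] fun _ => a * LB + b * LT := by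
      filter_upwards [hNmem] with x hx; simp [hgdef, hx, hLT, hLB]
    rw [int_combo16 pP pN θ hθ0 hθ1 _ _ _ hPc hNc,
      integral_congr_ae hPg, integral_congr_ae hNg, integral_const, integral_const] at h
    simp only [measure_univ, probReal_univ, ENNReal.toReal_one, one_smul, smul_eq_mul, one_mul] at h
    linarith [h]
  -- arithmetic contradiction
  have hsum : 0 < LT + LB := by linarith
  have hdiff : 0 < LB - LT := by linarith
  have h1 : (a + b - 1) * (LT + LB) = 0 := by linear_combination -eq1 - eq2
  have h2 : (a - b - (2 * π - 1)) * (LT - LB) = 0 := by linear_combination -eq1 + eq2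
  have hab1 : a + b = 1 := by
    rcases mul_eq_zero.1 h1 with h | h
    · linarith
    · linarith
  have hab2 : a - b = 2 * π - 1 := by
    rcases mul_eq_zero.1 h2 with h | h
    · linarith
    · linarith
  have ha : a = π := by linarith
  have hb : b = 1 - π := by linarith
  rw [ha, hb] at eq3
  set c := θ * (1 - π) + (1 - θ) * π with hc
  have hc0 : c * (LB - LT) = 0 := by linear_combination -eq3
  have hcpos : 0 < c := by
    rcases eq_or_lt_of_le hθ1 with h | h
    · have : c = 1 - π := by rw [hc, h]; ring
      linarith
    · have h1 : 0 ≤ θ * (1 - π) := mul_nonneg hθ0 (by linarith)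
      have h2 : 0 < (1 - θ) * π := mul_pos (by linarith) hπ0
      linarith
  nlinarith [mul_pos hcpos hdiff]
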